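/- arXiv:1608.04592 — 2 statements merged into one kernel-verified Lean document; each statement's English description precedes it below -/
import Mathlib

section
/- Soundness of the total-correctness Hoare proof system for data commands: if a triple {φ} π {φ'} is derivable in the total-correctness system (whose failure-statement rule requires φ ⇒ ℓ as a side condition, and which includes a decomposition rule inferring ⊢tot {φ} π {φ1 ∧ φ2} from ⊢par {φ} π {φ1} and ⊢tot {φ} π {φ2}), then every execution of π from a state satisfying φ terminates successfully (without reaching fail) in a state satisfying φ'. -/
/-- Data terms over variables `V` and data `D`. -/
inductive DTerm (V D : Type) where
  | var : V → DTerm V D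
  | const : D → DTerm V D
  | app : (List D → D) → List (DTerm V D) → DTerm V D

/-- Data atoms. -/
inductive Atom (V D : Type) where
  | bot : Atom V D
  | top : Atom V D
  | eq : DTerm V D → DTerm V D → Atom V D
  | rel : (List D → Prop) → List (DTerm V D) → Atom V D

/-- Data literals: atoms or negated atoms. -/
inductive Lit (V D : Type) where
  | pos : Atom V D → Lit V D
  | neg : Atom V D → Lit V D

/-- Data constraints: existential quantifications over a conjunction of literals. -/
inductive DC (V D : Type) where
  | ex : V → DC V D → DC V D
  | conj : List (Lit V D) → DC V D

/-- Data assignments: partial functions from variables to data (`none` = nil). -/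
abbrev Assg (V D : Type) := V → Option D

/-- Term evaluation; returns `none` (nil) if some variable is undefined. -/
def evalT (σ : Assg V D) : DTerm V D → Option D
  | .var x => σ x
  | .const d => some d
  | .app f ts => (ts.attach.mapM (fun t => evalT σ t.1)).map f
decreasing_by simp only [DTerm.app.sizeOf_spec]; have := List.sizeOf_lt_of_mem t.2; omega

/-- Variables of a term. -/
def varsT : DTerm V D → List V
  | .var x => [x]
  | .const _ => []
  | .app _ ts => ts.attach.flatMap (fun t => varsT t.1)
decreasing_by simp only [DTerm.app.sizeOf_spec]; have := List.sizeOf_lt_of_mem t.2; omega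

def varsA : Atom V D → List V
  | .bot => []
  | .top => []
  | .eq t1 t2 => varsT t1 ++ varsT t2
  | .rel _ ts => ts.flatMap varsT

def varsL : Lit V D → List V
  | .pos a => varsA a
  | .neg a => varsA a

/-- Free variables of a data constraint. -/
def freeDC [DecidableEq V] : DC V D → List V
  | .ex y φ => (freeDC φ).filter (fun z => z ≠ y)
  | .conj ls => ls.flatMap varsL

/-- Variables occurring (in atoms of) a data constraint. -/
def varsDC : DC V D → List V
  | .ex _ φ => varsDC φ
  | .conj ls => ls.flatMap varsL

/-- Bound variables (quantifier prefix) of a data constraint. -/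
def boundDC : DC V D → List V
  | .ex y φ => y :: boundDC φ
  | .conj _ => []

/-- Literals of the conjunctive kernel of a data constraint. -/
def lits : DC V D → List (Lit V D)
  | .ex _ φ => lits φ
  | .conj ls => ls

def symmEq : Lit V D → Option (Lit V D)
  | .pos (.eq t1 t2) => some (.pos (.eq t2 t1))
  | _ => none

/-- ≐-symmetric closure of the kernel literals. -/
def litsym (φ : DC V D) : List (Lit V D) := lits φ ++ (lits φ).filterMap symmEq

/-- Satisfaction of atoms. -/
def satA (σ : Assg V D) : Atom V D → Prop
  | .bot => False
  | .top => True
  | .eq t1 t2 => ∃ d, evalT σ t1 = some d ∧ evalT σ t2 = some d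
  | .rel R ts => ∃ ds, ts.mapM (evalT σ) = some ds ∧ R ds

/-- Satisfaction of literals. -/
def satL (σ : Assg V D) : Lit V D → Prop
  | .pos a => satA σ a
  | .neg a => (∀ x ∈ varsA a, (σ x).isSome) ∧ ¬ satA σ a

/-- Entailment of data constraints. -/
def sat [DecidableEq V] (σ : Assg V D) : DC V D → Prop
  | .ex x φ => ∃ d : D, sat (Function.update σ x (some d)) φ
  | .conj ls => ∀ l ∈ ls, satL σ l

open Classical in
/-- Restriction of an assignment to a set of variables. -/
noncomputable def restrict (σ : Assg V D) (X : Set V) : Assg V D :=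
  fun x => if x ∈ X then σ x else none

/-- Substitution in terms. -/
def substT [DecidableEq V] (x : V) (t : DTerm V D) : DTerm V D → DTerm V D
  | .var y => if y = x then t else .var y
  | .const d => .const d
  | .app f ts => .app f (ts.attach.map (fun s => substT x t s.1))
decreasing_by simp only [DTerm.app.sizeOf_spec]; have := List.sizeOf_lt_of_mem s.2; omega

def substA [DecidableEq V] (x : V) (t : DTerm V D) : Atom V D → Atom V D
  | .bot => .bot
  | .top => .top
  | .eq t1 t2 => .eq (substT x t t1) (substT x t t2)
  | .rel R ts => .rel R (ts.map (substT x t))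

def substL [DecidableEq V] (x : V) (t : DTerm V D) : Lit V D → Lit V D
  | .pos a => .pos (substA x t a)
  | .neg a => .neg (substA x t a)

/-- Capture-free substitution in data constraints (skipping under a binder of the same name). -/
def substDC [DecidableEq V] (x : V) (t : DTerm V D) : DC V D → DC V D
  | .ex y φ => if y = x then .ex y φ else .ex y (substDC x t φ)
  | .conj ls => .conj (ls.map (substL x t))

/-- Determinants of a variable in an atom. -/
def detA [DecidableEq V] (x : V) : Atom V D → List (DTerm V D)
  | .eq t1 t2 =>
      (match t1 with
        | .var y => if y = x ∧ x ∉ varsT t2 then [t2] else []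
        | _ => []) ++
      (match t2 with
        | .var y => if y = x ∧ x ∉ varsT t1 then [t1] else []
        | _ => [])
  | _ => []

def detL [DecidableEq V] (x : V) : Lit V D → List (DTerm V D)
  | .pos a => detA x a
  | .neg _ => []

/-- Determinants of a variable in a data constraint. -/
def detDC [DecidableEq V] (x : V) : DC V D → List (DTerm V D)
  | .ex y φ => if y = x then [] else detDC x φ
  | .conj ls => ls.flatMap (detL x)

/-- Syntactic existential quantification: substitute the least determinant if one exists. -/
def exFun [DecidableEq V] (x : V) (φ : DC V D) : DC V D :=
  match detDC x φ with
  | [] => .ex x φ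
  | t :: _ => substDC x t φ

/-- Constraint automata over states `Q`, variables `V` (ports and pre/post memory variables)
and data `D`. -/
structure CA (Q V D : Type) where
  states : Set Q
  Pall : Set V
  Pin : Set V
  Pout : Set V
  preM : Set V
  postM : Set V
  trans : Set (Q × Set V × DC V D × Q)
  init : Q

/-- Data constraints occurring on transitions. -/
def CA.dcs (A : CA Q V D) : Set (DC V D) :=
  {φ | ∃ q P q', (q, P, φ, q') ∈ A.trans}

/-- Hide a port: remove it from the port sets and existentially quantify it in data constraints. -/
def CA.hide (A : CA Q V D) (p : V) : CA Q V D :=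
  { A with
    Pall := A.Pall \ {p}, Pin := A.Pin \ {p}, Pout := A.Pout \ {p},
    trans := (fun tr => (tr.1, tr.2.1 \ {p}, DC.ex p tr.2.2.1, tr.2.2.2)) '' A.trans }

/-- Eliminate a port: remove it from the port sets and apply syntactic existential
quantification to data constraints. -/
def CA.elim [DecidableEq V] (A : CA Q V D) (p : V) : CA Q V D :=
  { A with
    Pall := A.Pall \ {p}, Pin := A.Pin \ {p}, Pout := A.Pout \ {p},
    trans := (fun tr => (tr.1, tr.2.1 \ {p}, exFun p tr.2.2.1, tr.2.2.2)) '' A.trans }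

open Classical in
/-- Substitute a data constraint `φ'` for every occurrence of `φ` on transitions. -/
noncomputable def CA.substCA (A : CA Q V D) (φ φ' : DC V D) : CA Q V D :=
  { A with
    trans := (fun tr => (tr.1, tr.2.1, if tr.2.2.1 = φ then φ' else tr.2.2.1, tr.2.2.2)) '' A.trans }

/-- Data commands. -/
inductive Cmd (V D : Type) where
  | skip : Cmd V D
  | nil : Cmd V D                       -- the empty command ε
  | assign : V → DTerm V D → Cmd V D
  | guard : DC V D → Cmd V D → Cmd V D  -- failure statement φ → π
  | seq : Cmd V D → Cmd V D → Cmd V D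

/-- Small-step semantics on configurations; the state `none` is the fail state. -/
inductive Step [DecidableEq V] :
    Cmd V D × Option (Assg V D) → Cmd V D × Option (Assg V D) → Prop where
  | skip {σ : Assg V D} : Step (.skip, some σ) (.nil, some σ)
  | assign {x t} {σ : Assg V D} :
      Step (.assign x t, some σ) (.nil, some (Function.update σ x (evalT σ t)))
  | guardT {φ π} {σ : Assg V D} : sat σ φ → Step (.guard φ π, some σ) (π, some σ)
  | guardF {φ π} {σ : Assg V D} : ¬ sat σ φ → Step (.guard φ π, some σ) (.nil, none)
  | seqStep {π π' π''} {σ σ' : Assg V D} :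
      Step (π, some σ) (π', some σ') → π' ≠ .nil →
      Step (.seq π π'', some σ) (.seq π' π'', some σ')
  | seqDone {π π''} {σ σ' : Assg V D} :
      Step (π, some σ) (.nil, some σ') → Step (.seq π π'', some σ) (π'', some σ')
  | seqFail {π π' π''} {σ : Assg V D} :
      Step (π, some σ) (π', none) → Step (.seq π π'', some σ) (.nil, none)

/-- Reflexive-transitive closure of the small-step semantics. -/
def Steps [DecidableEq V] :
    Cmd V D × Option (Assg V D) → Cmd V D × Option (Assg V D) → Prop :=
  Relation.ReflTransGen Step

/-- Partial-correctness semantics: successfully reachable final states. -/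
def final [DecidableEq V] (π : Cmd V D) (S : Set (Assg V D)) : Set (Assg V D) :=
  {σ' | ∃ σ ∈ S, Steps (π, some σ) (.nil, some σ')}

/-- Total-correctness semantics: additionally contains `none` (fail) if some execution fails. -/
def finalFail [DecidableEq V] (π : Cmd V D) (S : Set (Assg V D)) : Set (Option (Assg V D)) :=
  (some '' final π S) ∪
    {ς | ς = none ∧ ∃ σ ∈ S, ∃ π', Steps (π, some σ) (π', none)}

/-- Partial-correctness Hoare proof system (assertions as sets of assignments). -/
inductive HoareP [DecidableEq V] : Set (Assg V D) → Cmd V D → Set (Assg V D) → Prop where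
  | skip {P} : HoareP P .skip P
  | assign {P : Set (Assg V D)} {x t} :
      HoareP {σ | Function.update σ x (evalT σ t) ∈ P} (.assign x t) P
  | seq {P1 Pm P2 π1 π2} : HoareP P1 π1 Pm → HoareP Pm π2 P2 → HoareP P1 (.seq π1 π2) P2
  | cons {P1 P1' P2 P2' π} : HoareP P1' π P2' → P1 ⊆ P1' → P2' ⊆ P2 → HoareP P1 π P2
  | guard {P P' φ π} : HoareP (P ∩ {σ | sat σ φ}) π P' → HoareP P (.guard φ π) P'

/-- Total-correctness Hoare proof system. -/
inductive HoareT [DecidableEq V] : Set (Assg V D) → Cmd V D → Set (Assg V D) → Prop where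
  | skip {P} : HoareT P .skip P
  | assign {P : Set (Assg V D)} {x t} :
      HoareT {σ | Function.update σ x (evalT σ t) ∈ P} (.assign x t) P
  | seq {P1 Pm P2 π1 π2} : HoareT P1 π1 Pm → HoareT Pm π2 P2 → HoareT P1 (.seq π1 π2) P2
  | cons {P1 P1' P2 P2' π} : HoareT P1' π P2' → P1 ⊆ P1' → P2' ⊆ P2 → HoareT P1 π P2
  | guard {P P' φ π} :
      HoareT P π P' → P ⊆ {σ | sat σ φ} → HoareT P (.guard φ π) P'
  | decomp {P P1 P2 π} : HoareP P π P1 → HoareT P π P2 → HoareT P π (P1 ∩ P2)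

/-- The literal `x ≐ t`. -/
def eqLit (x : V) (t : DTerm V D) : Lit V D := .pos (.eq (.var x) t)

/-- A single-literal data constraint. -/
def litDC (l : Lit V D) : DC V D := .conj [l]

open Classical in
/-- Translation of the ordered equalities: assignment if the variable is fresh,
failure statement otherwise. -/
noncomputable def commEqs [DecidableEq V] (X : Set V) :
    List V → List (V × DTerm V D) → Cmd V D
  | _, [] => .skip
  | done, (x, t) :: rest =>
      .seq (if x ∈ X ∨ x ∈ done then .guard (litDC (eqLit x t)) .skip else .assign x t)
           (commEqs X (x :: done) rest)

/-- Translation of remaining literals into failure statements. -/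
def commRest : List (Lit V D) → Cmd V D
  | [] => .skip
  | l :: rest => .seq (.guard (litDC l) .skip) (commRest rest)

/-- Commandification: output of Algorithm 1 on the linearized literals. -/
noncomputable def commandify [DecidableEq V] (X : Set V)
    (eqs : List (V × DTerm V D)) (rest : List (Lit V D)) : Cmd V D :=
  .seq (commEqs X [] eqs) (commRest rest)

/-- The full literal list `ℓ1, …, ℓ_{n+m}` of a commandification problem. -/
def commLits (eqs : List (V × DTerm V D)) (rest : List (Lit V D)) : List (Lit V D) :=
  eqs.map (fun p => eqLit p.1 p.2) ++ rest

/-- Requirements of the commandification algorithm: the first `n` literals are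
equalities `x_i ≐ t_i` linearized so that all dependencies of each `t_i` are either
uncontrollable (in `X`) or assigned earlier, and every variable outside `X` occurs
among `x_1, …, x_n`. -/
def CommReq [DecidableEq V] (X : Set V)
    (eqs : List (V × DTerm V D)) (rest : List (Lit V D)) : Prop :=
  (∀ l ∈ commLits eqs rest, ∀ y ∈ varsL l, y ∈ X ∨ y ∈ eqs.map Prod.fst) ∧
  (∀ i (h : i < eqs.length), ∀ y ∈ varsT (eqs.get ⟨i, h⟩).2,
      y ∈ X ∨ y ∈ (eqs.take i).map Prod.fst)

/-- B-graphs: hypergraphs whose b-arcs have a set of tails and one head. -/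
structure BGraph (V : Type) where
  arcs : Set (Set V × V)

/-- The single-tailed arc relation obtained by splitting b-arcs. -/
def BGraph.rel (G : BGraph V) (a b : V) : Prop := ∃ T, (T, b) ∈ G.arcs ∧ a ∈ T

/-- Layers of the greedy exploration from the root. -/
def BGraph.layer (G : BGraph V) (root : V) : ℕ → Set V
  | 0 => {root}
  | n + 1 => G.layer root n ∪ {v | ∃ T, (T, v) ∈ G.arcs ∧ T ⊆ G.layer root n}

/-- Relation induced by a choice of one incoming b-arc per vertex. -/
def chosenRel (choice : V → Option (Set V)) (a b : V) : Prop :=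
  ∃ T, choice b = some T ∧ a ∈ T

/-- A ⋆-arborescence: one incoming b-arc per non-root vertex, acyclically. -/
def IsArbor (G : BGraph V) (root : V) (choice : V → Option (Set V)) : Prop :=
  choice root = none ∧
  (∀ v, v ≠ root → ∃ T, choice v = some T ∧ (T, v) ∈ G.arcs) ∧
  (∀ v, ¬ Relation.TransGen (chosenRel choice) v v)

/-- The data relation encoding a data command `π` run from initial states over `X`,
recording the values of the variables `xs`. -/
def cmdRel [DecidableEq V] (π : Cmd V D) (X : Set V) (xs : List V) (ds : List D) : Prop :=
  ∃ σ0 σ : Assg V D, (∀ x ∈ X, (σ0 x).isSome) ∧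
    Steps (π, some σ0) (.nil, some σ) ∧ xs.map σ = ds.map some

open Classical in
/-- `commfun`: encode the commandification of `φ` as a data relation applied to the
ordered free variables of `φ`, when the B-graph of `φ` over `X` has a ⋆-arborescence
and `X ⊆ free(φ)`; otherwise leave `φ` unchanged.  The algorithm producing the data
command and the arborescence test are parameters `alg` and `hasArb`. -/
noncomputable def commfun [LinearOrder V] (alg : DC V D → Set V → Cmd V D)
    (hasArb : DC V D → Set V → Prop) (φ : DC V D) (X : Set V) : DC V D :=
  let xs := (freeDC φ).toFinset.sort (· ≤ ·)
  if hasArb φ X ∧ X ⊆ {x | x ∈ freeDC φ} then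
    .conj [.pos (.rel (fun ds => cmdRel (alg φ X) X xs ds) (xs.map .var))]
  else φ

/-- The uncontrollable variables of a data constraint in an automaton. -/
def CA.uncontr [DecidableEq V] (A : CA Q V D) (φ : DC V D) : Set V :=
  {x | x ∈ freeDC φ} ∩ (A.Pin ∪ A.preM)

/-- Commandify an automaton. -/
noncomputable def CA.comm [LinearOrder V] (A : CA Q V D)
    (alg : DC V D → Set V → Cmd V D) (hasArb : DC V D → Set V → Prop) : CA Q V D :=
  { A with
    trans := (fun tr =>
      (tr.1, tr.2.1, commfun alg hasArb tr.2.2.1 (A.uncontr tr.2.2.1), tr.2.2.2)) '' A.trans }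


section Sound
variable {V D : Type} [DecidableEq V]

lemma nil_no_step {s : Option (Assg V D)} {c} : ¬ Step (V := V) (D := D) (.nil, s) c := by
  intro h; cases h

lemma none_no_step {π : Cmd V D} {c} : ¬ Step (V := V) (D := D) (π, none) c := by
  intro h; cases h

lemma steps_nil {s : Option (Assg V D)} {c} (h : Steps (V := V) (D := D) (.nil, s) c) :
    c = (.nil, s) := by
  rcases Relation.ReflTransGen.cases_head h with rfl | ⟨c', hs, _⟩
  · rfl
  · exact absurd hs nil_no_step

lemma steps_none {π : Cmd V D} {c} (h : Steps (V := V) (D := D) (π, none) c) :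
    c = (π, none) := by
  rcases Relation.ReflTransGen.cases_head h with rfl | ⟨c', hs, _⟩
  · rfl
  · exact absurd hs none_no_step

lemma steps_skip_nil {σ σ' : Assg V D} (h : Steps (.skip, some σ) (.nil, some σ')) :
    σ' = σ := by
  rcases Relation.ReflTransGen.cases_head h with heq | ⟨c', hs, hrest⟩
  · simp at heq
  · cases hs; have := steps_nil hrest; simp_all

lemma steps_skip_fail {σ : Assg V D} {π'} (h : Steps (.skip, some σ) (π', none)) : False := by
  rcases Relation.ReflTransGen.cases_head h with heq | ⟨c', hs, hrest⟩
  · simp at heq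
  · cases hs; have := steps_nil hrest; simp_all

lemma steps_assign_nil {x t} {σ σ' : Assg V D}
    (h : Steps (.assign x t, some σ) (.nil, some σ')) :
    σ' = Function.update σ x (evalT σ t) := by
  rcases Relation.ReflTransGen.cases_head h with heq | ⟨c', hs, hrest⟩
  · simp at heq
  · cases hs; have := steps_nil hrest; simp_all

lemma steps_assign_fail {x t} {σ : Assg V D} {π'}
    (h : Steps (.assign x t, some σ) (π', none)) : False := by
  rcases Relation.ReflTransGen.cases_head h with heq | ⟨c', hs, hrest⟩
  · simp at heq
  · cases hs; have := steps_nil hrest; simp_all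

lemma steps_guard_nil {φ} {π : Cmd V D} {σ σ' : Assg V D}
    (h : Steps (.guard φ π, some σ) (.nil, some σ')) :
    sat σ φ ∧ Steps (π, some σ) (.nil, some σ') := by
  rcases Relation.ReflTransGen.cases_head h with heq | ⟨c', hs, hrest⟩
  · simp at heq
  · cases hs with
    | guardT hsat => exact ⟨hsat, hrest⟩
    | guardF hns => have := steps_none hrest; simp_all

lemma steps_guard_fail {φ} {π : Cmd V D} {σ : Assg V D} {π'}
    (h : Steps (.guard φ π, some σ) (π', none)) :
    ¬ sat σ φ ∨ (sat σ φ ∧ ∃ π'', Steps (π, some σ) (π'', none)) := by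
  rcases Relation.ReflTransGen.cases_head h with heq | ⟨c', hs, hrest⟩
  · simp at heq
  · cases hs with
    | guardT hsat => exact Or.inr ⟨hsat, _, hrest⟩
    | guardF hns => exact Or.inl hns

lemma steps_seq_nil {π1 π2 : Cmd V D} {σ σ' : Assg V D}
    (h : Steps (.seq π1 π2, some σ) (.nil, some σ')) :
    ∃ σm, Steps (π1, some σ) (.nil, some σm) ∧ Steps (π2, some σm) (.nil, some σ') := by
  suffices H : ∀ c, Steps (V := V) (D := D) c (.nil, some σ') → ∀ π1 (σ : Assg V D),
      c = (.seq π1 π2, some σ) →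
      ∃ σm, Steps (π1, some σ) (.nil, some σm) ∧ Steps (π2, some σm) (.nil, some σ') from
    H _ h π1 σ rfl
  intro c hc
  induction hc using Relation.ReflTransGen.head_induction_on with
  | refl => intro π1 σ heq; simp at heq
  | head hs hrest ih =>
    intro π1 σ heq; subst heq
    cases hs with
    | seqStep hs1 hne =>
      obtain ⟨σm, h1, h2⟩ := ih _ _ rfl
      exact ⟨σm, Relation.ReflTransGen.head hs1 h1, h2⟩
    | seqDone hs1 => exact ⟨_, Relation.ReflTransGen.single hs1, hrest⟩
    | seqFail hs1 => have := steps_none hrest; simp_all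

lemma steps_seq_fail {π1 π2 : Cmd V D} {σ : Assg V D} {π'}
    (h : Steps (.seq π1 π2, some σ) (π', none)) :
    (∃ π'', Steps (π1, some σ) (π'', none)) ∨
    (∃ σm, Steps (π1, some σ) (.nil, some σm) ∧ ∃ π2', Steps (π2, some σm) (π2', none)) := by
  suffices H : ∀ c, Steps (V := V) (D := D) c (π', none) → ∀ π1 (σ : Assg V D),
      c = (.seq π1 π2, some σ) →
      (∃ π'', Steps (π1, some σ) (π'', none)) ∨
      (∃ σm, Steps (π1, some σ) (.nil, some σm) ∧ ∃ π2', Steps (π2, some σm) (π2', none)) from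
    H _ h π1 σ rfl
  intro c hc
  induction hc using Relation.ReflTransGen.head_induction_on with
  | refl => intro π1 σ heq; simp at heq
  | head hs hrest ih =>
    intro π1 σ heq; subst heq
    cases hs with
    | seqStep hs1 hne =>
      rcases ih _ _ rfl with ⟨π'', h1⟩ | ⟨σm, h1, h2⟩
      · exact Or.inl ⟨π'', Relation.ReflTransGen.head hs1 h1⟩
      · exact Or.inr ⟨σm, Relation.ReflTransGen.head hs1 h1, h2⟩
    | seqDone hs1 => exact Or.inr ⟨_, Relation.ReflTransGen.single hs1, _, hrest⟩
    | seqFail hs1 => exact Or.inl ⟨_, Relation.ReflTransGen.single hs1⟩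

lemma hoareP_sound {P P' : Set (Assg V D)} {π : Cmd V D} (h : HoareP P π P') :
    ∀ σ ∈ P, ∀ σ', Steps (π, some σ) (.nil, some σ') → σ' ∈ P' := by
  induction h with
  | skip => intro σ hσ σ' hst; rw [steps_skip_nil hst]; exact hσ
  | assign => intro σ hσ σ' hst; rw [steps_assign_nil hst]; exact hσ
  | seq h1 h2 ih1 ih2 =>
    intro σ hσ σ' hst
    obtain ⟨σm, hs1, hs2⟩ := steps_seq_nil hst
    exact ih2 _ (ih1 _ hσ _ hs1) _ hs2
  | cons h hpre hpost ih => intro σ hσ σ' hst; exact hpost (ih _ (hpre hσ) _ hst)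
  | guard h ih =>
    intro σ hσ σ' hst
    obtain ⟨hsat, hs⟩ := steps_guard_nil hst
    exact ih _ ⟨hσ, hsat⟩ _ hs

lemma hoareT_sound_aux {P P' : Set (Assg V D)} {π : Cmd V D} (h : HoareT P π P') :
    (∀ σ ∈ P, ∀ σ', Steps (π, some σ) (.nil, some σ') → σ' ∈ P') ∧
    (∀ σ ∈ P, ∀ π', ¬ Steps (π, some σ) (π', none)) := by
  induction h with
  | skip =>
    refine ⟨fun σ hσ σ' hst => ?_, fun σ _ π' hst => steps_skip_fail hst⟩
    rw [steps_skip_nil hst]; exact hσ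
  | assign =>
    refine ⟨fun σ hσ σ' hst => ?_, fun σ _ π' hst => steps_assign_fail hst⟩
    rw [steps_assign_nil hst]; exact hσ
  | seq h1 h2 ih1 ih2 =>
    constructor
    · intro σ hσ σ' hst
      obtain ⟨σm, hs1, hs2⟩ := steps_seq_nil hst
      exact ih2.1 _ (ih1.1 _ hσ _ hs1) _ hs2
    · intro σ hσ π' hst
      rcases steps_seq_fail hst with ⟨π'', h1'⟩ | ⟨σm, hs1, π2', hs2⟩
      · exact ih1.2 _ hσ _ h1'
      · exact ih2.2 _ (ih1.1 _ hσ _ hs1) _ hs2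
  | cons h hpre hpost ih =>
    exact ⟨fun σ hσ σ' hst => hpost (ih.1 _ (hpre hσ) _ hst),
      fun σ hσ π' hst => ih.2 _ (hpre hσ) _ hst⟩
  | guard h himp ih =>
    constructor
    · intro σ hσ σ' hst
      obtain ⟨_, hs⟩ := steps_guard_nil hst
      exact ih.1 _ hσ _ hs
    · intro σ hσ π' hst
      rcases steps_guard_fail hst with hns | ⟨_, π'', hs⟩
      · exact hns (himp hσ)
      · exact ih.2 _ hσ _ hs
  | decomp hp ht iht =>
    exact ⟨fun σ hσ σ' hst => ⟨hoareP_sound hp _ hσ _ hst, iht.1 _ hσ _ hst⟩, iht.2⟩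

end Sound

/-- soundness of the total-correctness Hoare proof system: a derivable
triple {P} π {P'} guarantees that every execution from a P-state terminates
successfully (never failing) in a P'-state. -/
theorem hoareT_sound {V D : Type} [DecidableEq V]
    (P P' : Set (Assg V D)) (π : Cmd V D) (h : HoareT P π P') :
    finalFail π P ⊆ some '' P' := by
  rintro ς (⟨σ', ⟨σ, hσ, hst⟩, rfl⟩ | ⟨rfl, σ, hσ, π', hst⟩)
  · exact ⟨σ', (hoareT_sound_aux h).1 _ hσ _ hst, rfl⟩
  · exact absurd hst ((hoareT_sound_aux h).2 _ hσ _)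
end

section
/- Soundness of commandification: if the linearized precedence ≺ satisfies the requirements of the commandification algorithm for a conjunction ℓ1 ∧ ⋯ ∧ ℓ_{n+m} (the first n literals being equalities x_i ≐ t_i ordered so that all dependencies of each t_i are assigned earlier or lie in the uncontrollable set X), then the command π produced by the algorithm—which translates each x_i ≐ t_i to the assignment x_i := t_i if x_i ∉ X ∪ {x_1,...,x_{i-1}} and to a failure statement otherwise, and translates the remaining m literals to failure statements—satisfies the partial-correctness triple { ⋀_{x∈X} x ≐ x } π { ℓ1 ∧ ⋯ ∧ ℓ_{n+m} }. -/
section Helpers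
variable {V D : Type}

private theorem mapM_congr' : ∀ {α β : Type} (l : List α) (f g : α → Option β),
    (∀ a ∈ l, f a = g a) → l.mapM f = l.mapM g := by
  intro α β l f g h
  induction l with
  | nil => rfl
  | cons a l ih =>
      simp only [List.mapM_cons, h a (by simp), ih (fun a ha => h a (by simp [ha]))]

theorem evalT_congr (σ σ' : Assg V D) : ∀ (t : DTerm V D),
    (∀ y ∈ varsT t, σ' y = σ y) → evalT σ' t = evalT σ t
  | .var x, h => by
      simp [varsT] at h; simp [evalT, h]
  | .const d, _ => by simp [evalT]
  | .app f ts, h => by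
      simp only [evalT]
      congr 1
      apply mapM_congr'
      intro t ht
      exact evalT_congr σ σ' t.1 (fun y hy => h y (by
        simp [varsT]; exact ⟨t.1, t.2, hy⟩))
decreasing_by simp only [DTerm.app.sizeOf_spec]; have := List.sizeOf_lt_of_mem t.2; omega

private theorem mapM_isSome : ∀ {α β : Type} (l : List α) (f : α → Option β),
    (∀ a ∈ l, (f a).isSome) → (l.mapM f).isSome := by
  intro α β l f h
  induction l with
  | nil => rfl
  | cons a l ih =>
      obtain ⟨b, hb⟩ := Option.isSome_iff_exists.1 (h a (by simp))
      obtain ⟨bs, hbs⟩ := Option.isSome_iff_exists.1 (ih (fun a ha => h a (by simp [ha])))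
      rw [List.mapM_cons, hb, hbs]
      rfl

theorem evalT_isSome (σ : Assg V D) : ∀ (t : DTerm V D),
    (∀ y ∈ varsT t, (σ y).isSome) → (evalT σ t).isSome
  | .var x, h => by
      simp [varsT] at h; simpa [evalT] using h
  | .const d, _ => by simp [evalT]
  | .app f ts, h => by
      simp only [evalT, Option.isSome_map]
      apply mapM_isSome
      intro t ht
      exact evalT_isSome σ t.1 (fun y hy => h y (by
        simp [varsT]; exact ⟨t.1, t.2, hy⟩))
decreasing_by simp only [DTerm.app.sizeOf_spec]; have := List.sizeOf_lt_of_mem t.2; omega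

theorem satL_eqLit {σ : Assg V D} {x : V} {t : DTerm V D} :
    satL σ (eqLit x t) ↔ ∃ d, σ x = some d ∧ evalT σ t = some d := by
  simp [satL, eqLit, satA, evalT]

theorem sat_litDC [DecidableEq V] {σ : Assg V D} {l : Lit V D} :
    sat σ (litDC l) ↔ satL σ l := by
  simp [sat, litDC]

theorem commRest_sound [DecidableEq V] :
    ∀ (rest : List (Lit V D)) (S : Set (Assg V D)),
    HoareP S (commRest rest) {σ | σ ∈ S ∧ ∀ l ∈ rest, satL σ l}
  | [], S => by
      simp only [commRest]
      refine HoareP.cons (HoareP.skip (P := S)) (le_refl S) ?_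
      intro σ h
      exact ⟨h, by simp⟩
  | l :: rest, S => by
      simp only [commRest]
      apply HoareP.seq (Pm := {σ | σ ∈ S ∧ satL σ l})
      · apply HoareP.guard
        exact HoareP.cons HoareP.skip (le_refl _)
          (by intro σ h; exact ⟨h.1, sat_litDC.1 h.2⟩)
      · apply HoareP.cons (commRest_sound rest {σ | σ ∈ S ∧ satL σ l}) (le_refl _)
        intro σ h
        refine ⟨h.1.1, ?_⟩
        intro l' hl'
        rcases List.mem_cons.1 hl' with rfl | hl'
        · exact h.1.2
        · exact h.2 l' hl'

theorem commEqs_sound [DecidableEq V] (X : Set V) (eqs0 : List (V × DTerm V D))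
    (hreq : ∀ i (h : i < eqs0.length), ∀ y ∈ varsT (eqs0.get ⟨i, h⟩).2,
      y ∈ X ∨ y ∈ (eqs0.take i).map Prod.fst) :
    ∀ (suf pre : List (V × DTerm V D)) (done : List V),
    eqs0 = pre ++ suf → (∀ v, v ∈ done ↔ v ∈ pre.map Prod.fst) →
    HoareP {σ : Assg V D | (∀ x ∈ X, (σ x).isSome) ∧ (∀ x ∈ done, (σ x).isSome) ∧
                 ∀ p ∈ pre, satL σ (eqLit p.1 p.2)}
      (commEqs X done suf)
      {σ : Assg V D | (∀ x ∈ X, (σ x).isSome) ∧ ∀ p ∈ eqs0, satL σ (eqLit p.1 p.2)}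
  | [], pre, done, heq, hdone => by
      simp only [commEqs]
      refine HoareP.cons HoareP.skip (le_refl _) ?_
      intro σ h
      exact ⟨h.1, by rw [heq, List.append_nil]; exact h.2.2⟩
  | (x, t) :: suf, pre, done, heq, hdone => by
      simp only [commEqs]
      have hget : eqs0.get ⟨pre.length, by rw [heq]; simp⟩ = (x, t) := by
        subst heq
        show (pre ++ (x, t) :: suf)[pre.length] = (x, t)
        rw [List.getElem_append_right (le_refl pre.length)]
        simp
      have htake : (eqs0.take pre.length).map Prod.fst = pre.map Prod.fst := by
        subst heq; simp
      have hvt : ∀ y ∈ varsT t, y ∈ X ∨ y ∈ done := by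
        intro y hy
        have := hreq pre.length (by rw [heq]; simp) y (by rw [hget]; exact hy)
        rcases this with h | h
        · exact Or.inl h
        · exact Or.inr ((hdone y).2 (htake ▸ h))
      apply HoareP.seq
        (Pm := {σ : Assg V D | (∀ x' ∈ X, (σ x').isSome) ∧ (∀ x' ∈ x :: done, (σ x').isSome) ∧
                 ∀ p ∈ pre ++ [(x, t)], satL σ (eqLit p.1 p.2)})
      · by_cases hx : x ∈ X ∨ x ∈ done
        · rw [if_pos hx]
          apply HoareP.guard
          refine HoareP.cons HoareP.skip (le_refl _) ?_
          rintro σ ⟨⟨h1, h2, h3⟩, h4⟩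
          have hsl : satL σ (eqLit x t) := sat_litDC.1 h4
          refine ⟨h1, ?_, ?_⟩
          · intro x' hx'
            rcases List.mem_cons.1 hx' with rfl | hx'
            · obtain ⟨d, hd, -⟩ := satL_eqLit.1 hsl
              simp [hd]
            · exact h2 x' hx'
          · intro p hp
            rcases List.mem_append.1 hp with hp | hp
            · exact h3 p hp
            · simp at hp; subst hp; exact hsl
        · rw [if_neg hx]
          push_neg at hx
          refine HoareP.cons HoareP.assign ?_ (le_refl _)
          rintro σ ⟨h1, h2, h3⟩
          have hsome : (evalT σ t).isSome := by
            apply evalT_isSome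
            intro y hy
            rcases hvt y hy with h | h
            · exact h1 y h
            · exact h2 y h
          obtain ⟨d, hd⟩ := Option.isSome_iff_exists.1 hsome
          have hup : ∀ y, y ≠ x → Function.update σ x (evalT σ t) y = σ y :=
            fun y hy => Function.update_of_ne hy _ _
          have hxnt : x ∉ varsT t := fun hc => by
            rcases hvt x hc with h | h
            · exact hx.1 h
            · exact hx.2 h
          refine ⟨?_, ?_, ?_⟩
          · intro y hy
            rw [hup y (fun hc => hx.1 (hc ▸ hy))]
            exact h1 y hy
          · intro y hy
            rcases List.mem_cons.1 hy with rfl | hy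
            · simp [Function.update_self, hd]
            · rw [hup y (fun hc => hx.2 (hc ▸ hy))]
              exact h2 y hy
          · intro p hp
            rcases List.mem_append.1 hp with hp | hp
            · -- earlier literal: x does not occur in it
              obtain ⟨j, hj⟩ := List.mem_iff_get.1 hp
              have hj1 : (j : ℕ) < eqs0.length := by
                rw [heq]; simp
                exact lt_of_lt_of_le j.2 (by simp)
              have hgetj : eqs0.get ⟨j, hj1⟩ = p := by
                subst heq; rw [← hj]
                exact List.getElem_append_left j.2
              have hvp : ∀ y ∈ varsT p.2, y ∈ X ∨ y ∈ done := by
                intro y hy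
                rcases hreq j hj1 y (hgetj ▸ hy) with h | h
                · exact Or.inl h
                · refine Or.inr ((hdone y).2 ?_)
                  have : eqs0.take j = pre.take j := by
                    subst heq
                    exact List.take_append_of_le_length (le_of_lt j.2)
                  rw [this] at h
                  exact List.map_subset Prod.fst (List.take_subset _ _) h
              have hp1 : p.1 ≠ x := by
                intro hc
                exact hx.2 ((hdone x).2 (by
                  rw [← hc]; exact List.mem_map_of_mem (f := Prod.fst) hp))
              have hxp : x ∉ varsT p.2 := fun hc => by
                rcases hvp x hc with h | h
                · exact hx.1 h
                · exact hx.2 h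
              obtain ⟨d', hd1, hd2⟩ := satL_eqLit.1 (h3 p hp)
              refine satL_eqLit.2 ⟨d', ?_, ?_⟩
              · rw [hup p.1 hp1]; exact hd1
              · rw [evalT_congr σ _ p.2 (fun y hy => hup y (fun hc => hxp (hc ▸ hy)))]
                exact hd2
            · simp at hp; subst hp
              refine satL_eqLit.2 ⟨d, by simp [Function.update_self, hd], ?_⟩
              rw [evalT_congr σ _ t (fun y hy => hup y (fun hc => hxnt (hc ▸ hy)))]
              exact hd
      · apply commEqs_sound X eqs0 hreq suf (pre ++ [(x, t)]) (x :: done)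
        · rw [heq]; simp
        · intro v; simp [hdone v]; tauto

end Helpers

/-- soundness of commandification: under the algorithm's requirements,
the generated command satisfies the partial-correctness triple
{ ⋀_{x∈X} x ≐ x } π { ℓ1 ∧ ⋯ ∧ ℓ_{n+m} }. -/
theorem commandify_sound {V D : Type} [DecidableEq V] (X : Set V)
    (eqs : List (V × DTerm V D)) (rest : List (Lit V D))
    (hreq : CommReq X eqs rest) :
    HoareP {σ : Assg V D | ∀ x ∈ X, (σ x).isSome}
      (commandify X eqs rest)
      {σ : Assg V D | ∀ l ∈ commLits eqs rest, satL σ l} := by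
  unfold commandify
  apply HoareP.seq
    (Pm := {σ : Assg V D | (∀ x ∈ X, (σ x).isSome) ∧ ∀ p ∈ eqs, satL σ (eqLit p.1 p.2)})
  · refine HoareP.cons (commEqs_sound X eqs hreq.2 eqs [] [] (by simp) (by simp)) ?_ (le_refl _)
    intro σ h
    exact ⟨h, by simp, by simp⟩
  · refine HoareP.cons (commRest_sound rest _) (le_refl _) ?_
    rintro σ ⟨⟨-, h1⟩, h2⟩ l hl
    rcases List.mem_append.1 hl with hl | hl
    · obtain ⟨p, hp, rfl⟩ := List.mem_map.1 hl
      exact h1 p hp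
    · exact h2 l hl
end
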